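/- Let A be an n×n real symmetric positive definite matrix and Φ an n×N real matrix with full column rank, so that ΦᵀA⁻¹Φ is invertible, and set Ψ = A⁻¹Φ(ΦᵀA⁻¹Φ)⁻¹ with columns ψ_1,…,ψ_N. Then for each i and every x ∈ ℝⁿ with Φᵀx = e_i (the i-th standard basis vector of ℝᴺ), one has ‖x‖²_A = ‖ψ_i‖²_A + ‖x − ψ_i‖²_A; in particular ψ_i is the unique minimizer of ‖x‖_A subject to the constraints φ_{i'}ᵀ x = δ_{i',i} for all 1 ≤ i' ≤ N, where φ_{i'} denotes the i'-th column of Φ. -/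

import Mathlib

open Matrix BigOperators

noncomputable section

/-- Euclidean norm of a vector. -/
def norm2 {ι : Type} [Fintype ι] (x : ι → ℝ) : ℝ := Real.sqrt (x ⬝ᵥ x)

/-- `A`-energy norm of a vector: `‖x‖_A = √(xᵀ A x)`. -/
def normA {ι : Type} [Fintype ι] (A : Matrix ι ι ℝ) (x : ι → ℝ) : ℝ :=
  Real.sqrt (x ⬝ᵥ A.mulVec x)

/-- Spectral (ℓ²-operator) norm of a square real matrix. -/
def specNorm {ι : Type} [Fintype ι] [DecidableEq ι] (B : Matrix ι ι ℝ) : ℝ :=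
  ‖Matrix.toEuclideanCLM (𝕜 := ℝ) B‖

/-- Smallest value of the Rayleigh quotient; for a symmetric matrix this is the
smallest eigenvalue. -/
def lamMin {ι : Type} [Fintype ι] (B : Matrix ι ι ℝ) : ℝ :=
  sInf {r : ℝ | ∃ x : ι → ℝ, x ⬝ᵥ x = 1 ∧ r = x ⬝ᵥ B.mulVec x}

/-- Largest value of the Rayleigh quotient; for a symmetric matrix this is the
largest eigenvalue. -/
def lamMax {ι : Type} [Fintype ι] (B : Matrix ι ι ℝ) : ℝ :=
  sSup {r : ℝ | ∃ x : ι → ℝ, x ⬝ᵥ x = 1 ∧ r = x ⬝ᵥ B.mulVec x}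

/-- With `Ψ = A⁻¹Φ(ΦᵀA⁻¹Φ)⁻¹`, each column `ψ_i` satisfies the
constraints `Φᵀψ_i = e_i`, the Pythagorean identity
`‖x‖²_A = ‖ψ_i‖²_A + ‖x − ψ_i‖²_A` for every feasible `x`, and in particular `ψ_i`
is the unique minimizer of `‖x‖_A` subject to `Φᵀx = e_i`. -/
theorem psi_column_is_unique_energy_minimizer {n N : ℕ}
    (A : Matrix (Fin n) (Fin n) ℝ) (hA : A.PosDef)
    (Φ : Matrix (Fin n) (Fin N) ℝ)
    (hΦind : LinearIndependent ℝ (fun i : Fin N => Φᵀ i))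
    (hinv : IsUnit (Φᵀ * A⁻¹ * Φ).det)
    (i : Fin N) (ψi : Fin n → ℝ)
    (hψi : ψi = fun r => (A⁻¹ * Φ * (Φᵀ * A⁻¹ * Φ)⁻¹) r i) :
    Φᵀ.mulVec ψi = Pi.single i 1 ∧
    (∀ x : Fin n → ℝ, Φᵀ.mulVec x = Pi.single i 1 →
      x ⬝ᵥ A.mulVec x =
        ψi ⬝ᵥ A.mulVec ψi + (x - ψi) ⬝ᵥ A.mulVec (x - ψi)) ∧
    (∀ x : Fin n → ℝ, Φᵀ.mulVec x = Pi.single i 1 →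
      normA A ψi ≤ normA A x) ∧
    (∀ x : Fin n → ℝ, Φᵀ.mulVec x = Pi.single i 1 →
      normA A x = normA A ψi → x = ψi) := by
  have hM : Φᵀ * (A⁻¹ * Φ * (Φᵀ * A⁻¹ * Φ)⁻¹) = 1 := by
    rw [← Matrix.mul_assoc, ← Matrix.mul_assoc, Matrix.mul_nonsing_inv _ hinv]
  have hψ' : ψi = (A⁻¹ * Φ * (Φᵀ * A⁻¹ * Φ)⁻¹).mulVec (Pi.single i 1) := by
    rw [hψi]; ext r; rw [mulVec_single]; simp
  have hcons : Φᵀ.mulVec ψi = Pi.single i 1 := by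
    rw [hψ', mulVec_mulVec, hM, one_mulVec]
  -- A ψi = Φ (M⁻¹ e_i)
  have hAinv : A * A⁻¹ = 1 := Matrix.mul_nonsing_inv _ (isUnit_iff_ne_zero.mpr hA.det_pos.ne')
  have hAψ : A.mulVec ψi = Φ.mulVec ((Φᵀ * A⁻¹ * Φ)⁻¹.mulVec (Pi.single i 1)) := by
    rw [hψ', mulVec_mulVec, mulVec_mulVec, ← Matrix.mul_assoc, ← Matrix.mul_assoc,
      hAinv, Matrix.one_mul]
  -- orthogonality
  have horth : ∀ x : Fin n → ℝ, Φᵀ.mulVec x = Pi.single i 1 →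
      (x - ψi) ⬝ᵥ A.mulVec ψi = 0 := by
    intro x hx
    rw [hAψ, dotProduct_mulVec, ← mulVec_transpose]
    have : Φᵀ.mulVec (x - ψi) = 0 := by
      rw [mulVec_sub, hx, hcons, sub_self]
    rw [this, zero_dotProduct]
  have hsym : ∀ u v : Fin n → ℝ, u ⬝ᵥ A.mulVec v = v ⬝ᵥ A.mulVec u := by
    intro u v
    have hAt : Aᵀ = A := by
      have h := hA.isHermitian
      rwa [Matrix.IsHermitian, conjTranspose_eq_transpose_of_trivial] at h
    rw [dotProduct_mulVec, ← mulVec_transpose, hAt, dotProduct_comm]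
  have hpyth : ∀ x : Fin n → ℝ, Φᵀ.mulVec x = Pi.single i 1 →
      x ⬝ᵥ A.mulVec x = ψi ⬝ᵥ A.mulVec ψi + (x - ψi) ⬝ᵥ A.mulVec (x - ψi) := by
    intro x hx
    have h1 := horth x hx
    have h2 : ψi ⬝ᵥ A.mulVec (x - ψi) = 0 := by rw [hsym]; exact h1
    have hxe : x = ψi + (x - ψi) := by ring
    calc x ⬝ᵥ A.mulVec x = (ψi + (x - ψi)) ⬝ᵥ A.mulVec (ψi + (x - ψi)) := by rw [← hxe]
    _ = ψi ⬝ᵥ A.mulVec ψi + ψi ⬝ᵥ A.mulVec (x - ψi) + ((x - ψi) ⬝ᵥ A.mulVec ψi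
        + (x - ψi) ⬝ᵥ A.mulVec (x - ψi)) := by
        rw [mulVec_add, add_dotProduct, dotProduct_add, dotProduct_add]
    _ = ψi ⬝ᵥ A.mulVec ψi + (x - ψi) ⬝ᵥ A.mulVec (x - ψi) := by rw [h1, h2]; ring
  refine ⟨hcons, hpyth, ?_, ?_⟩
  · intro x hx
    unfold normA
    apply Real.sqrt_le_sqrt
    rw [hpyth x hx]
    have := hA.posSemidef.dotProduct_mulVec_nonneg (x - ψi)
    simp only [star_trivial, RCLike.re_to_real] at this
    linarith
  · intro x hx heq
    have hnn : ∀ v : Fin n → ℝ, 0 ≤ v ⬝ᵥ A.mulVec v := by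
      intro v; have := hA.posSemidef.dotProduct_mulVec_nonneg v
      simpa only [star_trivial, RCLike.re_to_real] using this
    have h1 : x ⬝ᵥ A.mulVec x = ψi ⬝ᵥ A.mulVec ψi := by
      have := congrArg (fun t => t ^ 2) heq
      simpa [normA, Real.sq_sqrt (hnn x), Real.sq_sqrt (hnn ψi)] using this
    have h2 : (x - ψi) ⬝ᵥ A.mulVec (x - ψi) = 0 := by
      have := hpyth x hx
      linarith
    have h3 : x - ψi = 0 := by
      by_contra hne
      have := hA.dotProduct_mulVec_pos hne
      simp only [star_trivial, RCLike.re_to_real] at this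
      rw [h2] at this
      exact lt_irrefl 0 this
    exact sub_eq_zero.mp h3
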